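/- The insertion algorithm of Step 7 terminates with a well-defined string: given a string S_0 = (b̄'_1, ..., b̄'_k, ā'_1, ..., ā'_p) where b̄'_1 > b̄'_2 > ... > b̄'_k are positive integers, repeatedly moving each b̄'_i (for i = 1, ..., k in order) to the rightmost position such that all elements to its left are strictly larger than it yields a final string S_f in which the subsequence of the elements b̄'_1, ..., b̄'_k appears in decreasing order and each b̄'_j has only strictly larger elements to its left. -/

import Mathlib

/-- Insertion of `x` into `l` at the rightmost position such that every element to the
left of `x` is strictly larger than `x`. -/
def insRight (x : ℤ) (l : List ℤ) : List ℤ :=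
  l.takeWhile (fun y => decide (x < y)) ++ x :: l.dropWhile (fun y => decide (x < y))

lemma insRight_perm (x : ℤ) (l : List ℤ) : (insRight x l).Perm (x :: l) := by
  unfold insRight
  have h1 : (l.takeWhile (fun y => decide (x < y)) ++ x :: l.dropWhile (fun y => decide (x < y))).Perm
      (x :: (l.takeWhile (fun y => decide (x < y)) ++ l.dropWhile (fun y => decide (x < y)))) :=
    List.perm_middle
  rwa [List.takeWhile_append_dropWhile] at h1

lemma insRight_cons_pos (z c : ℤ) (l : List ℤ) (hc : z < c) :
    insRight z (c :: l) = c :: insRight z l := by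
  simp [insRight, hc]

lemma insRight_cons_neg (z c : ℤ) (l : List ℤ) (hc : ¬ z < c) :
    insRight z (c :: l) = z :: c :: l := by
  simp [insRight, hc]

lemma sub_drop (p : ℤ → Bool) : ∀ {l l' : List ℤ}, l'.Sublist l → (∀ x ∈ l', p x = false) →
    l'.Sublist (l.dropWhile p)
  | [], l', hs, _ => by simpa using hs
  | c :: t, l', hs, h => by
    rw [List.dropWhile_cons]
    cases hs with
    | cons _ hs' =>
      split
      · exact sub_drop p hs' h
      · exact hs'.cons c
    | cons_cons _ hs' =>
      have : p c = false := h c (by simp)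
      rw [this]
      simpa using hs'.cons₂ c

lemma insRight_decomp (z x : ℤ) (hx : x < z) :
    ∀ (pre post : List ℤ), (∀ y ∈ pre, x < y) →
    ∃ pre', insRight z (pre ++ x :: post) = pre' ++ x :: post ∧ ∀ y ∈ pre', x < y
  | [], post, _ => by
    refine ⟨[z], ?_, ?_⟩
    · rw [List.nil_append, insRight_cons_neg z x post (not_lt.2 hx.le)]
      rfl
    · simpa using hx
  | c :: pre, post, h => by
    by_cases hc : z < c
    · obtain ⟨pre', he, hp⟩ := insRight_decomp z x hx pre post (fun y hy => h y (.tail _ hy))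
      refine ⟨c :: pre', ?_, ?_⟩
      · rw [List.cons_append, insRight_cons_pos z c _ hc, he]
        rfl
      · intro y hy
        rcases List.mem_cons.mp hy with rfl | hy
        · exact h y (by simp)
        · exact hp y hy
    · refine ⟨z :: c :: pre, ?_, ?_⟩
      · rw [List.cons_append, insRight_cons_neg z c _ hc]
        rfl
      · intro y hy
        rcases List.mem_cons.mp hy with rfl | hy
        · exact hx
        · exact h y hy

lemma insFold_perm (a : List ℤ) : ∀ b : List ℤ, (b ++ a).Perm (b.foldr insRight a)
  | [] => List.Perm.refl a
  | h :: t => ((insFold_perm a t).cons h).trans (insRight_perm _ _).symm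

lemma main_lemma (a : List ℤ) : ∀ (b : List ℤ), b.Pairwise (· > ·) →
    b.Sublist (b.foldr insRight a) ∧ ∀ x ∈ b, ∃ pre post : List ℤ,
      b.foldr insRight a = pre ++ x :: post ∧ ∀ y ∈ pre, x < y
  | [], _ => ⟨List.nil_sublist _, by simp⟩
  | h :: t, hp => by
    have hlt : ∀ x ∈ t, x < h := fun x hx => (List.pairwise_cons.mp hp).1 x hx
    obtain ⟨ihs, ihp⟩ := main_lemma a t (List.pairwise_cons.mp hp).2
    set F := t.foldr insRight a with hF
    have hfold : (h :: t).foldr insRight a = insRight h F := rfl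
    constructor
    · rw [hfold]
      have h1 : t.Sublist (F.dropWhile (fun y => decide (h < y))) := by
        apply sub_drop _ ihs
        intro x hx
        simpa using not_lt.2 (hlt x hx).le
      have h2 : (h :: t).Sublist (h :: F.dropWhile (fun y => decide (h < y))) := h1.cons₂ h
      exact h2.trans (List.sublist_append_right _ _)
    · intro x hx
      rcases List.mem_cons.mp hx with rfl | hx
      · refine ⟨F.takeWhile (fun y => decide (x < y)), F.dropWhile (fun y => decide (x < y)),
          rfl, ?_⟩
        intro y hy
        simpa using List.mem_takeWhile_imp hy
      · obtain ⟨pre, post, he, hpre⟩ := ihp x hx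
        obtain ⟨pre', he', hpre'⟩ := insRight_decomp h x (hlt x hx) pre post hpre
        exact ⟨pre', post, by rw [hfold, he, he'], hpre'⟩

/-- Step 7 of the bijection terminates with a well-defined string: starting from
`S₀ = (b̄'_1, …, b̄'_k, ā'_1, …, ā'_p)` with `b̄'_1 > … > b̄'_k` positive, and moving each
`b̄'_i` (deepest first, as in the paper's example) to the rightmost position at which all
elements to its left are strictly larger, one obtains a final string `S_f` which is a
rearrangement of `S₀`, in which the elements `b̄'_1, …, b̄'_k` appear (in this decreasing
order) as a subsequence, and each `b̄'_j` occurs with only strictly larger elements to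
its left. -/
theorem stmt_17 (b a : List ℤ) (hb : b.Chain' (· > ·)) (hbpos : ∀ x ∈ b, 0 < x) :
    (b ++ a).Perm (b.foldr insRight a) ∧
    b.Sublist (b.foldr insRight a) ∧
    ∀ x ∈ b, ∃ pre post : List ℤ,
      b.foldr insRight a = pre ++ x :: post ∧ ∀ y ∈ pre, x < y := by
  have hp : b.Pairwise (· > ·) := List.isChain_iff_pairwise.mp hb
  obtain ⟨hs, hprop⟩ := main_lemma a b hp
  exact ⟨insFold_perm a b, hs, hprop⟩
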